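/- Complementary slackness for the dual decomposition: let W : 𝕋^d → ℝ be continuous, let W(x) = W⁺(x) + K(x) + 2c be an admissible dual decomposition, and let F be a measure in the relaxed cone C attaining the lower bound, i.e. (1/2)∫ W dF = c. Then ∫ W⁺ dF = 0 and ∫ K dF = 0. (Equations (5.7)–(5.8): F must have support complementary to W⁺ in real space and to K in Fourier space.) -/

import Mathlib

open MeasureTheory Real
open scoped ENNReal

theorem cos2pi_periodic : Function.Periodic (fun t : ℝ => Real.cos (2 * Real.pi * t)) 1 := by
  intro x; simp [mul_add, Real.cos_add_two_pi]

theorem sin2pi_periodic : Function.Periodic (fun t : ℝ => Real.sin (2 * Real.pi * t)) 1 := by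
  intro x; simp [mul_add, Real.sin_add_two_pi]

/-- The function `x ↦ cos (2π x)` on the circle `ℝ/ℤ`. -/
noncomputable def cosA : AddCircle (1 : ℝ) → ℝ := cos2pi_periodic.lift

/-- The function `x ↦ sin (2π x)` on the circle `ℝ/ℤ`. -/
noncomputable def sinA : AddCircle (1 : ℝ) → ℝ := sin2pi_periodic.lift

/-- The `d`-dimensional torus `𝕋^d = ℝ^d/ℤ^d`, with its Haar probability measure `volume`. -/
abbrev Torus (d : ℕ) := Fin d → AddCircle (1 : ℝ)

/-- `cos (2π k·x)` for `k ∈ ℤ^d` and `x ∈ 𝕋^d`. -/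
noncomputable def tcos {d : ℕ} (k : Fin d → ℤ) (x : Torus d) : ℝ := cosA (∑ i, k i • x i)

/-- `sin (2π k·x)` for `k ∈ ℤ^d` and `x ∈ 𝕋^d`. -/
noncomputable def tsin {d : ℕ} (k : Fin d → ℤ) (x : Torus d) : ℝ := sinA (∑ i, k i • x i)

/-- The autocorrelation of a measure `ρ` on `𝕋^d`: the pushforward of `ρ × ρ`
under `(x, y) ↦ x - y`. -/
noncomputable def autocorr {d : ℕ} (ρ : Measure (Torus d)) : Measure (Torus d) :=
  (ρ.prod ρ).map (fun p => p.1 - p.2)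

/-- The relaxed cone `C`: nonnegative measures on `𝕋^d` of total mass one with vanishing
sine coefficients and nonnegative cosine coefficients for all `k ≠ 0`. -/
def inCone {d : ℕ} (F : Measure (Torus d)) : Prop :=
  F Set.univ = 1 ∧ ∀ k : Fin d → ℤ, k ≠ 0 →
    (∫ x, tsin k x ∂F) = 0 ∧ 0 ≤ ∫ x, tcos k x ∂F

lemma cosA_cont : Continuous cosA :=
  continuous_coinduced_dom.mpr (by show Continuous (fun t : ℝ => Real.cos (2 * Real.pi * t)); fun_prop)

lemma abs_cosA_le (x : AddCircle (1:ℝ)) : |cosA x| ≤ 1 := by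
  induction x using QuotientAddGroup.induction_on
  exact Real.abs_cos_le_one _

lemma cont_integrable {d : ℕ} {F : Measure (Torus d)} [IsFiniteMeasure F]
    {f : Torus d → ℝ} (hf : Continuous f) : Integrable f F := by
  rw [← integrableOn_univ]
  exact hf.continuousOn.integrableOn_compact isCompact_univ

lemma tcos_cont {d : ℕ} (k : Fin d → ℤ) : Continuous (tcos k) := by
  unfold tcos
  exact cosA_cont.comp (by continuity)

lemma abs_tcos_le {d : ℕ} (k : Fin d → ℤ) (x : Torus d) : |tcos k x| ≤ 1 :=
  abs_cosA_le _

/-- Complementary slackness (equations (5.7)-(5.8)): if `W = W⁺ + K + 2c` is an admissible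
dual decomposition and `F` in the relaxed cone attains the lower bound `(1/2) ∫ W dF = c`,
then `∫ W⁺ dF = 0` and `∫ K dF = 0`. -/
theorem stmt10 {d : ℕ} (W Wp : Torus d → ℝ) (a : (Fin d → ℤ) → ℝ) (c : ℝ)
    (hWc : Continuous W) (hWpc : Continuous Wp) (hWp : ∀ x, 0 ≤ Wp x)
    (ha_symm : ∀ k, a (-k) = a k) (ha_nonneg : ∀ k, k ≠ 0 → 0 ≤ a k) (ha0 : a 0 = 0)
    (ha_sum : Summable a)
    (hdecomp : ∀ x, W x = Wp x + (∑' k : Fin d → ℤ, a k * tcos k x) + 2 * c)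
    (F : Measure (Torus d)) (hF : inCone F)
    (hattain : (1/2) * ∫ x, W x ∂F = c) :
    (∫ x, Wp x ∂F) = 0 ∧ (∫ x, (∑' k : Fin d → ℤ, a k * tcos k x) ∂F) = 0 := by
  haveI : IsProbabilityMeasure F := ⟨hF.1⟩
  have ha_nn : ∀ k, 0 ≤ a k := by
    intro k
    by_cases h : k = 0
    · simp [h, ha0]
    · exact ha_nonneg k h
  set K : Torus d → ℝ := fun x => ∑' k : Fin d → ℤ, a k * tcos k x with hK
  -- K is continuous
  have hbnd : ∀ (k : Fin d → ℤ) (x : Torus d), ‖a k * tcos k x‖ ≤ a k := by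
    intro k x
    rw [norm_mul, Real.norm_eq_abs, Real.norm_eq_abs, abs_of_nonneg (ha_nn k)]
    calc a k * |tcos k x| ≤ a k * 1 := by
          exact mul_le_mul_of_nonneg_left (abs_tcos_le k x) (ha_nn k)
      _ = a k := mul_one _
  have hKc : Continuous K :=
    continuous_tsum (fun k => (continuous_const.mul (tcos_cont k))) ha_sum hbnd
  -- integrabilities
  have hWint : Integrable W F := cont_integrable hWc
  have hWpint : Integrable Wp F := cont_integrable hWpc
  have hKint : Integrable K F := cont_integrable hKc
  have hgint : ∀ k : Fin d → ℤ, Integrable (fun x => a k * tcos k x) F :=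
    fun k => cont_integrable (continuous_const.mul (tcos_cont k))
  -- swap sum and integral
  have hnormint : ∀ k : Fin d → ℤ, (∫ x, ‖a k * tcos k x‖ ∂F) ≤ a k := by
    intro k
    calc (∫ x, ‖a k * tcos k x‖ ∂F) ≤ ∫ _, a k ∂F :=
          integral_mono (hgint k).norm (integrable_const _) (fun x => hbnd k x)
      _ = a k := by simp
  have hsum_norm : Summable (fun k : Fin d → ℤ => ∫ x, ‖a k * tcos k x‖ ∂F) :=
    Summable.of_nonneg_of_le (fun k => integral_nonneg (fun x => norm_nonneg _))
      hnormint ha_sum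
  have hswap : (∑' k : Fin d → ℤ, ∫ x, a k * tcos k x ∂F) = ∫ x, K x ∂F :=
    integral_tsum_of_summable_integral_norm hgint hsum_norm
  -- each term nonneg
  have hKnn : 0 ≤ ∫ x, K x ∂F := by
    rw [← hswap]
    refine tsum_nonneg (fun k => ?_)
    rw [integral_const_mul]
    by_cases h : k = 0
    · simp [h, ha0]
    · exact mul_nonneg (ha_nn k) (hF.2 k h).2
  have hWpnn : 0 ≤ ∫ x, Wp x ∂F := integral_nonneg hWp
  -- total
  have hWeq : (∫ x, W x ∂F) = (∫ x, Wp x ∂F) + (∫ x, K x ∂F) + 2 * c := by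
    calc (∫ x, W x ∂F) = ∫ x, (Wp x + K x) + 2 * c ∂F := by
          exact integral_congr_ae (Filter.Eventually.of_forall hdecomp)
      _ = (∫ x, Wp x + K x ∂F) + ∫ _, 2 * c ∂F :=
          integral_add (hWpint.add hKint) (integrable_const _)
      _ = (∫ x, Wp x ∂F) + (∫ x, K x ∂F) + 2 * c := by
          rw [integral_add hWpint hKint]; simp
  have : (∫ x, W x ∂F) = 2 * c := by linarith
  constructor <;> linarith [hWeq.symm.trans this]
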